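/- Let N ∈ ℕ, a ∈ ℝ, δ > 0, A = diag(a − (0π)², …, a − (Nπ)²) ∈ ℝ^{(N+1)×(N+1)}, and C = (1, √2, √2, …, √2) ∈ ℝ^{1×(N+1)}. Then there exist a column vector L ∈ ℝ^{N+1} and a symmetric positive-definite matrix Q ∈ ℝ^{(N+1)×(N+1)} such that Q(A + LC) + (A + LC)ᵀQ ≺ −2δQ, i.e. Q(A + LC) + (A + LC)ᵀQ + 2δQ is negative definite. -/

import Mathlib

open Matrix Finset Polynomial

/-- The diagonal matrix `A = diag(a - (0π)², …, a - (Nπ)²)`. -/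
noncomputable def Amat (N : ℕ) (a : ℝ) : Matrix (Fin (N + 1)) (Fin (N + 1)) ℝ :=
  Matrix.diagonal fun n : Fin (N + 1) => a - ((n : ℕ) * Real.pi) ^ 2

/-- The row vector `C = (1, √2, √2, …, √2)`. -/
noncomputable def Cmat (N : ℕ) : Matrix (Fin 1) (Fin (N + 1)) ℝ :=
  Matrix.of fun _ j => if (j : ℕ) = 0 then (1 : ℝ) else Real.sqrt 2

namespace Stmt7Aux
variable (N : ℕ) (a δ : ℝ)

noncomputable def lam (i : Fin (N+1)) : ℝ := a - ((i:ℕ) * Real.pi)^2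

noncomputable def mu (j : Fin (N+1)) : ℝ := min (-δ-1) (a - ((N:ℝ) * Real.pi)^2 - 1) - (j:ℕ)

lemma lam_inj : Function.Injective (lam N a) := by
  intro i k h
  have h2 : ((i:ℕ) * Real.pi)^2 = ((k:ℕ) * Real.pi)^2 := by
    unfold lam at h; linarith
  have hpi := Real.pi_pos
  have h3 : ((i:ℕ) : ℝ) * Real.pi = ((k:ℕ) : ℝ) * Real.pi := by
    have hi : 0 ≤ ((i:ℕ) : ℝ) * Real.pi := by positivity
    have hk : 0 ≤ ((k:ℕ) : ℝ) * Real.pi := by positivity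
    nlinarith
  have h4 : ((i:ℕ) : ℝ) = ((k:ℕ) : ℝ) := mul_right_cancel₀ (ne_of_gt hpi) h3
  exact Fin.ext (Nat.cast_injective h4)

lemma mu_inj : Function.Injective (mu N a δ) := by
  intro i k h
  unfold mu at h
  have : ((i:ℕ) : ℝ) = ((k:ℕ) : ℝ) := by linarith
  exact Fin.ext (Nat.cast_injective this)

lemma mu_lt_lam (j i : Fin (N+1)) : mu N a δ j < lam N a i := by
  unfold mu lam
  have h1 : min (-δ-1) (a - ((N:ℝ) * Real.pi)^2 - 1) ≤ a - ((N:ℝ) * Real.pi)^2 - 1 :=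
    min_le_right _ _
  have h2 : ((i:ℕ) * Real.pi)^2 ≤ ((N:ℝ) * Real.pi)^2 := by
    have hi : ((i:ℕ) : ℝ) ≤ (N:ℝ) := by
      exact_mod_cast Nat.le_of_lt_succ i.isLt
    have hpi := Real.pi_pos
    have hi0 : (0:ℝ) ≤ ((i:ℕ) : ℝ) := Nat.cast_nonneg _
    have := pow_le_pow_left₀ (by positivity : (0:ℝ) ≤ ((i:ℕ):ℝ) * Real.pi)
      (by nlinarith : ((i:ℕ):ℝ) * Real.pi ≤ (N:ℝ) * Real.pi) 2
    exact this
  have h3 : (0:ℝ) ≤ (j:ℕ) := Nat.cast_nonneg _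
  linarith

lemma mu_lt_negδ (hδ : 0 < δ) (j : Fin (N+1)) : mu N a δ j < -δ := by
  unfold mu
  have h1 : min (-δ-1) (a - ((N:ℝ) * Real.pi)^2 - 1) ≤ -δ-1 := min_le_left _ _
  have h3 : (0:ℝ) ≤ (j:ℕ) := Nat.cast_nonneg _
  linarith

end Stmt7Aux

namespace Stmt7Aux
variable (N : ℕ) (a δ : ℝ)

noncomputable def gg (i : Fin (N+1)) : ℝ :=
  (∏ k, (lam N a i - mu N a δ k)) / (∏ k ∈ Finset.univ.erase i, (lam N a i - lam N a k))

lemma gg_ne_zero (i : Fin (N+1)) : gg N a δ i ≠ 0 := by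
  unfold gg
  apply div_ne_zero
  · exact Finset.prod_ne_zero_iff.2 fun k _ => sub_ne_zero_of_ne (mu_lt_lam N a δ k i).ne'
  · exact Finset.prod_ne_zero_iff.2 fun k hk =>
      sub_ne_zero_of_ne fun h => (Finset.mem_erase.1 hk).1.symm (lam_inj N a h)

lemma key_identity (j : Fin (N+1)) :
    ∑ i, gg N a δ i / (mu N a δ j - lam N a i) = -1 := by
  classical
  set lm := lam N a with hlm
  set m := mu N a δ with hm
  have hinj : Set.InjOn lm (Finset.univ : Finset (Fin (N+1))) :=
    fun x _ y _ h => lam_inj N a h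
  set P : ℝ[X] := ∏ k, (X - C (m k)) with hP
  set Qp : ℝ[X] := ∏ k, (X - C (lm k)) with hQp
  have hPm : P.Monic := monic_prod_of_monic _ _ fun k _ => monic_X_sub_C _
  have hQm : Qp.Monic := monic_prod_of_monic _ _ fun k _ => monic_X_sub_C _
  have hPd : P.degree = (Finset.univ : Finset (Fin (N+1))).card := by
    rw [hP, degree_prod]; simp [degree_X_sub_C]
  have hQd : Qp.degree = (Finset.univ : Finset (Fin (N+1))).card := by
    rw [hQp, degree_prod]; simp [degree_X_sub_C]
  have hdeg : (P - Qp).degree < (Finset.univ : Finset (Fin (N+1))).card := by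
    rw [← hPd]
    exact degree_sub_lt (hPd.trans hQd.symm) hPm.ne_zero (by rw [hPm.leadingCoeff, hQm.leadingCoeff])
  have hL := Lagrange.eq_interpolate (v := lm) hinj hdeg
  have hEval := congrArg (Polynomial.eval (m j)) hL
  -- compute LHS of hEval
  have hPe : P.eval (m j) = 0 := by
    rw [hP, eval_prod]
    exact Finset.prod_eq_zero (Finset.mem_univ j) (by simp)
  have hQe : Qp.eval (m j) = ∏ k, (m j - lm k) := by
    rw [hQp, eval_prod]; simp
  have hfe : ∀ i : Fin (N+1), (P - Qp).eval (lm i) = ∏ k, (lm i - m k) := by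
    intro i
    have : Qp.eval (lm i) = 0 := by
      rw [hQp, eval_prod]
      exact Finset.prod_eq_zero (Finset.mem_univ i) (by simp)
    rw [eval_sub, this, sub_zero, hP, eval_prod]; simp
  rw [eval_sub, hPe, hQe, zero_sub] at hEval
  rw [Lagrange.interpolate_apply, eval_finset_sum] at hEval
  have hEval2 : -(∏ k, (m j - lm k)) =
      ∑ i, (∏ k, (lm i - m k)) *
        ∏ k ∈ Finset.univ.erase i, ((lm i - lm k)⁻¹ * (m j - lm k)) := by
    rw [hEval]
    refine Finset.sum_congr rfl fun i _ => ?_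
    rw [eval_mul, eval_C, hfe i, Lagrange.basis, eval_prod]
    congr 1
    refine Finset.prod_congr rfl fun k _ => ?_
    simp [Lagrange.basisDivisor]
  -- nonvanishing facts
  have hmlne : ∀ (x i : Fin (N+1)), m x - lm i ≠ 0 := fun x i =>
    sub_ne_zero_of_ne (ne_of_lt (mu_lt_lam N a δ x i))
  have hPne : (∏ k, (m j - lm k)) ≠ 0 := Finset.prod_ne_zero_iff.2 fun k _ => hmlne j k
  have hterm : ∀ i : Fin (N+1), gg N a δ i / (m j - lm i) =
      ((∏ k, (lm i - m k)) *
        ∏ k ∈ Finset.univ.erase i, ((lm i - lm k)⁻¹ * (m j - lm k))) / ∏ k, (m j - lm k) := by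
    intro i
    have hD : (∏ k ∈ Finset.univ.erase i, (lm i - lm k)) ≠ 0 :=
      Finset.prod_ne_zero_iff.2 fun k hk =>
        sub_ne_zero_of_ne fun h => (Finset.mem_erase.1 hk).1.symm (lam_inj N a h)
    have hE : (∏ k ∈ Finset.univ.erase i, (m j - lm k)) ≠ 0 :=
      Finset.prod_ne_zero_iff.2 fun k _ => hmlne j k
    have hsplit : (∏ k, (m j - lm k)) =
        (m j - lm i) * ∏ k ∈ Finset.univ.erase i, (m j - lm k) :=
      (Finset.mul_prod_erase _ _ (Finset.mem_univ i)).symm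
    rw [Finset.prod_mul_distrib, Finset.prod_inv_distrib]
    unfold gg
    rw [← hlm, ← hm, hsplit]
    have hc : m j - lm i ≠ 0 := hmlne j i
    rw [div_div, div_eq_div_iff (mul_ne_zero hD hc) (mul_ne_zero hc hE)]
    have h2 : (∏ x ∈ Finset.univ.erase i, (lm i - lm x))⁻¹ *
        (∏ x ∈ Finset.univ.erase i, (lm i - lm x)) = 1 := inv_mul_cancel₀ hD
    linear_combination (-((∏ k : Fin (N+1), (lm i - m k)) * (m j - lm i) *
        ∏ x ∈ Finset.univ.erase i, (m j - lm x))) * h2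
  calc ∑ i, gg N a δ i / (m j - lm i)
      = ∑ i, ((∏ k, (lm i - m k)) *
          ∏ k ∈ Finset.univ.erase i, ((lm i - lm k)⁻¹ * (m j - lm k))) / ∏ k, (m j - lm k) :=
        Finset.sum_congr rfl fun i _ => hterm i
    _ = (∑ i, (∏ k, (lm i - m k)) *
          ∏ k ∈ Finset.univ.erase i, ((lm i - lm k)⁻¹ * (m j - lm k))) / ∏ k, (m j - lm k) :=
        (Finset.sum_div _ _ _).symm
    _ = (-(∏ k, (m j - lm k))) / ∏ k, (m j - lm k) := by rw [hEval2]
    _ = -1 := by rw [neg_div, div_self hPne]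

end Stmt7Aux

namespace Stmt7Aux
variable (N : ℕ) (a δ : ℝ)

noncomputable def cvec (i : Fin (N+1)) : ℝ := if (i:ℕ) = 0 then 1 else Real.sqrt 2

lemma cvec_ne_zero (i : Fin (N+1)) : cvec N i ≠ 0 := by
  unfold cvec
  split
  · norm_num
  · positivity

noncomputable def ell (i : Fin (N+1)) : ℝ := -(gg N a δ i) / cvec N i

lemma ell_ne_zero (i : Fin (N+1)) : ell N a δ i ≠ 0 :=
  div_ne_zero (neg_ne_zero.2 (gg_ne_zero N a δ i)) (cvec_ne_zero N i)

noncomputable def evec (j : Fin (N+1)) : Fin (N+1) → ℝ :=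
  fun i => ell N a δ i / (mu N a δ j - lam N a i)

lemma evec_ne_zero (j : Fin (N+1)) : evec N a δ j ≠ 0 := by
  intro h
  have h0 := congrFun h 0
  have : ell N a δ 0 / (mu N a δ j - lam N a 0) ≠ 0 :=
    div_ne_zero (ell_ne_zero N a δ 0)
      (sub_ne_zero_of_ne (ne_of_lt (mu_lt_lam N a δ j 0)))
  exact this h0

lemma cvec_dot_evec (j : Fin (N+1)) :
    ∑ k, cvec N k * evec N a δ j k = 1 := by
  have h := key_identity N a δ j
  have h2 : ∀ k : Fin (N+1), cvec N k * evec N a δ j k = -(gg N a δ k / (mu N a δ j - lam N a k)) := by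
    intro k
    unfold evec ell
    field_simp [cvec_ne_zero N k]
  rw [Finset.sum_congr rfl fun k _ => h2 k, Finset.sum_neg_distrib, h, neg_neg]

noncomputable def Lmat : Matrix (Fin (N+1)) (Fin 1) ℝ :=
  Matrix.of fun i _ => ell N a δ i

lemma eigen (j : Fin (N+1)) :
    (Amat N a + Lmat N a δ * Cmat N) *ᵥ (evec N a δ j) = mu N a δ j • evec N a δ j := by
  funext i
  have hsum : ∑ k, cvec N k * evec N a δ j k = 1 := cvec_dot_evec N a δ j
  have hCL : ((Lmat N a δ * Cmat N) *ᵥ evec N a δ j) i = ell N a δ i := by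
    simp only [mulVec, dotProduct, Matrix.mul_apply, Lmat, Cmat, Matrix.of_apply,
      Fin.sum_univ_one]
    have hck : ∀ k : Fin (N+1), (if (k:ℕ) = 0 then (1:ℝ) else Real.sqrt 2) = cvec N k := by
      intro k; rfl
    calc ∑ k : Fin (N+1), ell N a δ i * (if (k:ℕ) = 0 then (1:ℝ) else Real.sqrt 2) * evec N a δ j k
        = ell N a δ i * ∑ k, cvec N k * evec N a δ j k := by
          rw [Finset.mul_sum]
          exact Finset.sum_congr rfl fun k _ => by rw [hck k]; ring
      _ = ell N a δ i := by rw [hsum, mul_one]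
  have hA : ((Amat N a) *ᵥ evec N a δ j) i = lam N a i * evec N a δ j i := by
    simp [Amat, mulVec_diagonal, lam]
  rw [add_mulVec, Pi.add_apply, hA, hCL]
  have hne : mu N a δ j - lam N a i ≠ 0 :=
    sub_ne_zero_of_ne (ne_of_lt (mu_lt_lam N a δ j i))
  show lam N a i * evec N a δ j i + ell N a δ i = mu N a δ j * evec N a δ j i
  unfold evec
  field_simp
  ring

end Stmt7Aux

namespace Stmt7Aux

lemma conj_posDef {n : ℕ} (W : Matrix (Fin n) (Fin n) ℝ) (hW : IsUnit W) (d : Fin n → ℝ)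
    (hd : ∀ j, 0 < d j) : (Wᵀ * Matrix.diagonal d * W).PosDef := by
  refine Matrix.PosDef.of_dotProduct_mulVec_pos ?_ ?_
  · have h := Matrix.isHermitian_conjTranspose_mul_mul W
      (Matrix.isHermitian_diagonal d)
    rwa [Matrix.conjTranspose_eq_transpose_of_trivial] at h
  · intro x hx
    have hy : W *ᵥ x ≠ 0 := by
      intro h0
      exact hx (Matrix.mulVec_injective_iff_isUnit.2 hW (by rw [h0, Matrix.mulVec_zero]))
    have hstar : star x = x := by funext i; exact star_trivial _
    rw [hstar]
    have hrw : x ⬝ᵥ ((Wᵀ * Matrix.diagonal d * W) *ᵥ x)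
        = (W *ᵥ x) ⬝ᵥ (Matrix.diagonal d *ᵥ (W *ᵥ x)) := by
      rw [← Matrix.mulVec_mulVec, ← Matrix.mulVec_mulVec, Matrix.dotProduct_mulVec x Wᵀ,
        Matrix.vecMul_transpose]
    rw [hrw]
    obtain ⟨i, hi⟩ := Function.ne_iff.1 hy
    have : ∀ k, (W *ᵥ x) k * (Matrix.diagonal d *ᵥ (W *ᵥ x)) k = d k * ((W *ᵥ x) k)^2 := by
      intro k; rw [Matrix.mulVec_diagonal]; ring
    rw [dotProduct]
    rw [Finset.sum_congr rfl fun k _ => this k]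
    refine Finset.sum_pos' (fun k _ => mul_nonneg (hd k).le (sq_nonneg _))
      ⟨i, Finset.mem_univ i, ?_⟩
    have hi' : (W *ᵥ x) i ≠ 0 := hi
    have h2 : 0 < ((W *ᵥ x) i)^2 := (sq_nonneg _).lt_of_ne (Ne.symm (pow_ne_zero 2 hi'))
    exact mul_pos (hd i) h2

variable (N : ℕ) (a δ : ℝ)

noncomputable def Vmat : Matrix (Fin (N+1)) (Fin (N+1)) ℝ :=
  Matrix.of fun i j => evec N a δ j i

lemma isUnit_Vmat : IsUnit (Vmat N a δ) := by
  rw [← Matrix.linearIndependent_cols_iff_isUnit]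
  have h : (Vmat N a δ).col = evec N a δ := by
    funext j; funext i; rfl
  rw [h]
  refine Module.End.eigenvectors_linearIndependent'
    (Matrix.mulVecLin (Amat N a + Lmat N a δ * Cmat N)) (mu N a δ) (mu_inj N a δ)
    (evec N a δ) (fun j => ?_)
  rw [Module.End.hasEigenvector_iff]
  refine ⟨Module.End.mem_eigenspace_iff.2 ?_, evec_ne_zero N a δ j⟩
  rw [Matrix.mulVecLin_apply]
  exact eigen N a δ j

end Stmt7Aux

open Stmt7Aux in
/-- there exist an observer gain column vector `L` and a symmetric
positive-definite matrix `Q` with `Q(A + LC) + (A + LC)ᵀQ + 2δQ` negative definite,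
i.e. `Q(A + LC) + (A + LC)ᵀQ ≺ -2δQ`. -/
theorem stmt7 (N : ℕ) (a : ℝ) (δ : ℝ) (hδ : 0 < δ) :
    ∃ (L : Matrix (Fin (N + 1)) (Fin 1) ℝ) (Q : Matrix (Fin (N + 1)) (Fin (N + 1)) ℝ),
      Q.PosDef ∧
      (-(Q * (Amat N a + L * Cmat N) + (Amat N a + L * Cmat N)ᵀ * Q + (2 * δ) • Q)).PosDef := by
  classical
  set M : Matrix (Fin (N+1)) (Fin (N+1)) ℝ := Amat N a + Lmat N a δ * Cmat N with hMdef
  set V : Matrix (Fin (N+1)) (Fin (N+1)) ℝ := Vmat N a δ with hVdef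
  have hV : IsUnit V := isUnit_Vmat N a δ
  have hdet : IsUnit V.det := (Matrix.isUnit_iff_isUnit_det V).1 hV
  have hVV' : V * V⁻¹ = 1 := Matrix.mul_nonsing_inv V hdet
  have hV'V : V⁻¹ * V = 1 := Matrix.nonsing_inv_mul V hdet
  set D : Matrix (Fin (N+1)) (Fin (N+1)) ℝ := Matrix.diagonal (mu N a δ) with hDdef
  have hMV : M * V = V * D := by
    ext i j
    rw [Matrix.mul_apply, hDdef, Matrix.mul_diagonal]
    have h : ∑ k, M i k * evec N a δ j k = mu N a δ j * evec N a δ j i := by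
      have h0 := congrFun (eigen N a δ j) i
      rw [hMdef]
      simpa [Matrix.mulVec, dotProduct] using h0
    simp only [hVdef, Vmat, Matrix.of_apply]
    rw [h]; ring
  set W : Matrix (Fin (N+1)) (Fin (N+1)) ℝ := V⁻¹ with hWdef
  have hWunit : IsUnit W := ⟨⟨V⁻¹, V, hV'V, hVV'⟩, rfl⟩
  have hWM : W * M = D * W := by
    have h1 : W * (M * V) * W = D * W := by
      rw [hMV, hWdef, ← Matrix.mul_assoc, hV'V, Matrix.one_mul]
    calc W * M = W * M * 1 := by rw [Matrix.mul_one]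
      _ = W * M * (V * W) := by rw [hWdef, hVV']
      _ = W * (M * V) * W := by simp only [Matrix.mul_assoc]
      _ = D * W := h1
  set Q : Matrix (Fin (N+1)) (Fin (N+1)) ℝ := Wᵀ * W with hQdef
  have hQM : Q * M = Wᵀ * D * W := by
    rw [hQdef, Matrix.mul_assoc, hWM, ← Matrix.mul_assoc]
  have hMQ : Mᵀ * Q = Wᵀ * D * W := by
    calc Mᵀ * Q = Mᵀ * Wᵀ * W := by rw [hQdef, Matrix.mul_assoc]
      _ = (W * M)ᵀ * W := by rw [Matrix.transpose_mul]
      _ = (D * W)ᵀ * W := by rw [hWM]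
      _ = Wᵀ * Dᵀ * W := by rw [Matrix.transpose_mul]
      _ = Wᵀ * D * W := by rw [hDdef, Matrix.diagonal_transpose]
  have hDneg : Matrix.diagonal (fun j : Fin (N+1) => -(2 * mu N a δ j + 2*δ))
      = -(D + D + (2*δ) • (1 : Matrix (Fin (N+1)) (Fin (N+1)) ℝ)) := by
    ext i j
    by_cases h : i = j <;>
      simp [hDdef, Matrix.diagonal_apply, Matrix.one_apply, h] <;> ring
  have key : -(Q * M + Mᵀ * Q + (2*δ) • Q)
      = Wᵀ * Matrix.diagonal (fun j : Fin (N+1) => -(2 * mu N a δ j + 2*δ)) * W := by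
    rw [hDneg, hQM, hMQ, hQdef]
    simp only [Matrix.neg_mul, Matrix.mul_neg, Matrix.mul_add, Matrix.add_mul,
      mul_smul_comm, smul_mul_assoc, Matrix.mul_one]
  refine ⟨Lmat N a δ, Q, ?_, ?_⟩
  · have hQpos := conj_posDef W hWunit (fun _ => 1) (fun _ => one_pos)
    rwa [Matrix.diagonal_one, Matrix.mul_one] at hQpos
  · rw [← hMdef, key]
    refine conj_posDef W hWunit _ fun j => ?_
    have := mu_lt_negδ N a δ hδ j
    linarith
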